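/- arXiv:1606.07158 — 3 statements merged into one kernel-verified Lean document; each statement's English description precedes it below -/
import Mathlib

section
/- Let a, b > 0, 0 < β < 1 with 2β + a(1-β) = 1, and let f : [0,∞) → [0,∞) be C¹ positive satisfying f'(t) ≤ a f(t)/(t+1) + b f(t)^β/(t+1)^{2β} for all t ≥ 0. Then f(t)^{1-β} ≤ f(0)^{1-β}(t+1)^{1-2β} + b(1-β)(t+1)^{1-2β} ln(t+1) for all t ≥ 0. -/
theorem gronwall_type_critical (a b β : ℝ) (ha : 0 < a) (hb : 0 < b)
    (hβ0 : 0 < β) (hβ1 : β < 1) (hcrit : 2 * β + a * (1 - β) = 1)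
    (f : ℝ → ℝ) (hf : ContDiff ℝ 1 f)
    (hfpos : ∀ t, 0 ≤ t → 0 < f t)
    (hineq : ∀ t, 0 ≤ t →
      deriv f t ≤ a * f t / (t + 1) + b * f t ^ β / (t + 1) ^ (2 * β)) :
    ∀ t, 0 ≤ t → f t ^ (1 - β) ≤
      f 0 ^ (1 - β) * (t + 1) ^ (1 - 2 * β)
        + b * (1 - β) * (t + 1) ^ (1 - 2 * β) * Real.log (t + 1) := by
  set c : ℝ := 1 - 2 * β with hc
  have hca : c = a * (1 - β) := by rw [hc]; linarith
  set F : ℝ → ℝ := fun s => f s ^ (1 - β) * (s + 1) ^ (-c) - b * (1 - β) * Real.log (s + 1)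
    with hF
  have hdf : Differentiable ℝ f := hf.differentiable one_ne_zero
  -- derivative of F at interior points
  have hD : ∀ t : ℝ, 0 < t → HasDerivAt F
      ((deriv f t * (1 - β) * f t ^ (1 - β - 1)) * (t + 1) ^ (-c)
        + f t ^ (1 - β) * (1 * (-c) * (t + 1) ^ (-c - 1))
        - b * (1 - β) * (1 / (t + 1))) t := by
    intro t ht
    have hu : f t ≠ 0 := (hfpos t ht.le).ne'
    have hv : t + 1 ≠ 0 := by positivity
    have h1 : HasDerivAt (fun s => f s ^ (1 - β))
        (deriv f t * (1 - β) * f t ^ (1 - β - 1)) t :=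
      (hdf t).hasDerivAt.rpow_const (Or.inl hu)
    have h2 : HasDerivAt (fun s : ℝ => (s + 1) ^ (-c))
        (1 * (-c) * (t + 1) ^ (-c - 1)) t :=
      ((hasDerivAt_id t).add_const 1).rpow_const (Or.inl hv)
    have h4 : HasDerivAt (fun s : ℝ => Real.log (s + 1)) (1 / (t + 1)) t := by
      simpa using ((hasDerivAt_id t).add_const 1).log hv
    exact (h1.mul h2).sub (h4.const_mul (b * (1 - β)))
  -- the derivative is nonpositive
  have hDle : ∀ t : ℝ, 0 < t →
      (deriv f t * (1 - β) * f t ^ (1 - β - 1)) * (t + 1) ^ (-c)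
        + f t ^ (1 - β) * (1 * (-c) * (t + 1) ^ (-c - 1))
        - b * (1 - β) * (1 / (t + 1)) ≤ 0 := by
    intro t ht
    have hu : (0:ℝ) < f t := hfpos t ht.le
    have hv : (0:ℝ) < t + 1 := by linarith
    set u := f t
    set v := t + 1
    have hexp : (1:ℝ) - β - 1 = -β := by ring
    rw [hexp]
    have hpos : (0:ℝ) < (1 - β) * u ^ (-β) * v ^ (-c) :=
      mul_pos (mul_pos (by linarith) (Real.rpow_pos_of_pos hu _)) (Real.rpow_pos_of_pos hv _)
    have hM : deriv f t ≤ a * u / v + b * u ^ β / v ^ (2 * β) := hineq t ht.le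
    have step1 : (deriv f t * (1 - β) * u ^ (-β)) * v ^ (-c)
        ≤ (a * u / v + b * u ^ β / v ^ (2 * β)) * ((1 - β) * u ^ (-β) * v ^ (-c)) := by
      calc (deriv f t * (1 - β) * u ^ (-β)) * v ^ (-c)
          = deriv f t * ((1 - β) * u ^ (-β) * v ^ (-c)) := by ring
        _ ≤ (a * u / v + b * u ^ β / v ^ (2 * β)) * ((1 - β) * u ^ (-β) * v ^ (-c)) :=
            mul_le_mul_of_nonneg_right hM hpos.le
    have e1 : u ^ (1 - β) = u * u ^ (-β) := by
      rw [show (1:ℝ) - β = 1 + -β by ring, Real.rpow_add hu, Real.rpow_one]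
    have e2 : u ^ β * u ^ (-β) = 1 := by
      rw [← Real.rpow_add hu]; simp
    have e3 : v ^ (-c - 1) = v ^ (-c) / v := by
      rw [show -c - 1 = -c + -1 by ring, Real.rpow_add hv, Real.rpow_neg_one,
        div_eq_mul_inv]
    have e4 : v ^ (-c) = v ^ (2 * β) / v := by
      rw [show -c = 2 * β + -1 by rw [hc]; ring, Real.rpow_add hv, Real.rpow_neg_one,
        div_eq_mul_inv]
    have key : (a * u / v + b * u ^ β / v ^ (2 * β)) * ((1 - β) * u ^ (-β) * v ^ (-c))
        + u ^ (1 - β) * (1 * (-c) * v ^ (-c - 1)) - b * (1 - β) * (1 / v) = 0 := by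
      rw [e1, e3, e4, hca]
      have hv2 : v ^ (2 * β) ≠ 0 := by positivity
      field_simp
      linear_combination ((1 - β) * b * (t + 1)) * e2
    linarith [step1, key]
  -- F is antitone on [0, ∞)
  have hcont : ContinuousOn F (Set.Ici 0) := by
    apply ContinuousOn.sub
    · apply ContinuousOn.mul
      · exact hf.continuous.continuousOn.rpow_const (fun x _ => Or.inr (by linarith))
      · apply ContinuousOn.rpow_const
        · exact (continuous_id.add continuous_const).continuousOn
        · intro x hx
          exact Or.inl (by simp only [Set.mem_Ici] at hx; positivity)
    · refine continuousOn_const.mul (ContinuousOn.log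
        (continuous_id.add continuous_const).continuousOn (fun x hx => ?_))
      simp only [Set.mem_Ici] at hx; positivity
  have hanti : AntitoneOn F (Set.Ici 0) := by
    apply antitoneOn_of_deriv_nonpos (convex_Ici 0) hcont
    · intro t ht
      rw [interior_Ici] at ht
      exact (hD t ht).differentiableAt.differentiableWithinAt
    · intro t ht
      rw [interior_Ici] at ht
      rw [(hD t ht).deriv]
      exact hDle t ht
  intro t ht
  have hFt : F t ≤ F 0 := hanti (le_refl (0:ℝ)) ht ht
  have hv : (0:ℝ) < t + 1 := by linarith
  have hF0 : F 0 = f 0 ^ (1 - β) := by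
    simp [hF]
  rw [hF0] at hFt
  simp only [hF] at hFt
  -- hFt : f t ^ (1-β) * (t+1)^(-c) - b*(1-β)*log(t+1) ≤ f 0 ^ (1-β)
  have hmul : f t ^ (1 - β) * (t + 1) ^ (-c) * (t + 1) ^ c
      ≤ (f 0 ^ (1 - β) + b * (1 - β) * Real.log (t + 1)) * (t + 1) ^ c := by
    apply mul_le_mul_of_nonneg_right _ (by positivity)
    linarith
  have hid : (t + 1) ^ (-c) * (t + 1) ^ c = 1 := by
    rw [← Real.rpow_add hv]; simp
  calc f t ^ (1 - β) = f t ^ (1 - β) * ((t + 1) ^ (-c) * (t + 1) ^ c) := by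
        rw [hid, mul_one]
    _ = f t ^ (1 - β) * (t + 1) ^ (-c) * (t + 1) ^ c := by ring
    _ ≤ (f 0 ^ (1 - β) + b * (1 - β) * Real.log (t + 1)) * (t + 1) ^ c := hmul
    _ = f 0 ^ (1 - β) * (t + 1) ^ (1 - 2 * β)
        + b * (1 - β) * (t + 1) ^ (1 - 2 * β) * Real.log (t + 1) := by
        rw [hc]; ring
end

section
/- Let a, b > 0, 0 < β < 1 with 2β + a(1-β) ≠ 1, and let f : [0,∞) → [0,∞) be C¹ positive satisfying f'(t) ≤ a f(t)/(t+1) + b f(t)^β/(t+1)^{2β} for all t ≥ 0. Then f(t)^{1-β} ≤ f(0)^{1-β}(t+1)^{a(1-β)} + (b(1-β)/(1-(2β+a(1-β)))) ((t+1)^{1-2β} - (t+1)^{a(1-β)}) for all t ≥ 0. -/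
theorem gronwall_type_noncritical (a b β : ℝ) (ha : 0 < a) (hb : 0 < b)
    (hβ0 : 0 < β) (hβ1 : β < 1) (hnoncrit : 2 * β + a * (1 - β) ≠ 1)
    (f : ℝ → ℝ) (hf : ContDiff ℝ 1 f)
    (hfpos : ∀ t, 0 ≤ t → 0 < f t)
    (hineq : ∀ t, 0 ≤ t →
      deriv f t ≤ a * f t / (t + 1) + b * f t ^ β / (t + 1) ^ (2 * β)) :
    ∀ t, 0 ≤ t → f t ^ (1 - β) ≤
      f 0 ^ (1 - β) * (t + 1) ^ (a * (1 - β))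
        + b * (1 - β) / (1 - (2 * β + a * (1 - β)))
          * ((t + 1) ^ (1 - 2 * β) - (t + 1) ^ (a * (1 - β))) := by
  set A : ℝ := a * (1 - β) with hA
  set p : ℝ := 1 - 2 * β - A with hp
  have hpne : p ≠ 0 := by
    intro h; apply hnoncrit; rw [hp] at h; linarith
  set C : ℝ := b * (1 - β) / p with hC
  have hCp : C * p = b * (1 - β) := by rw [hC]; field_simp
  have h1β : (0:ℝ) < 1 - β := by linarith
  set φ : ℝ → ℝ := fun t => f t ^ (1 - β) * (t + 1) ^ (-A) - C * (t + 1) ^ p with hφ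
  have hderiv : ∀ x : ℝ, 0 < x → HasDerivAt φ
      ((deriv f x * (1 - β) * f x ^ (1 - β - 1)) * (x + 1) ^ (-A)
        + f x ^ (1 - β) * (1 * -A * (x + 1) ^ (-A - 1))
        - C * (1 * p * (x + 1) ^ (p - 1))) x := by
    intro x hx
    have hfx : f x ≠ 0 := (hfpos x hx.le).ne'
    have hux : x + 1 ≠ 0 := by positivity
    have h1 : HasDerivAt f (deriv f x) x :=
      (hf.differentiable one_ne_zero x).hasDerivAt
    have h2 : HasDerivAt (fun t => f t ^ (1 - β))
        (deriv f x * (1 - β) * f x ^ (1 - β - 1)) x :=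
      h1.rpow_const (Or.inl hfx)
    have hu : HasDerivAt (fun t : ℝ => t + 1) 1 x := (hasDerivAt_id x).add_const 1
    have h3 : HasDerivAt (fun t : ℝ => (t + 1) ^ (-A))
        (1 * -A * (x + 1) ^ (-A - 1)) x := hu.rpow_const (Or.inl hux)
    have h4 : HasDerivAt (fun t : ℝ => (t + 1) ^ p)
        (1 * p * (x + 1) ^ (p - 1)) x := hu.rpow_const (Or.inl hux)
    exact (h2.mul h3).sub (h4.const_mul C)
  have hderiv_le : ∀ x ∈ interior (Set.Ici (0:ℝ)), deriv φ x ≤ 0 := by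
    intro x hx
    rw [interior_Ici] at hx
    have hx0 : 0 < x := hx
    rw [(hderiv x hx0).deriv]
    have hFpos : 0 < f x := hfpos x hx0.le
    have hupos : 0 < x + 1 := by positivity
    set F := f x with hF
    set u := x + 1 with hu
    set P := F ^ (-β) with hP
    set Q := u ^ (-A) with hQ
    set R := u ^ (-(2*β)) with hR
    have hPF : P * F = F ^ (1 - β) := by
      rw [hP, show P * F = F ^ (-β) * F ^ (1:ℝ) by rw [Real.rpow_one],
        ← Real.rpow_add hFpos]
      congr 1; ring
    have hPFβ : P * F ^ β = 1 := by
      rw [hP, ← Real.rpow_add hFpos]; simp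
    have hRinv : (u ^ (2*β))⁻¹ = R := by
      rw [hR, Real.rpow_neg hupos.le]
    have hQu : u ^ (-A - 1) = Q / u := by
      rw [hQ, Real.rpow_sub hupos, Real.rpow_one]
    have hQR : u ^ (p - 1) = Q * R := by
      rw [hQ, hR, ← Real.rpow_add hupos]; congr 1; rw [hp]; ring
    have hFP : F ^ (1 - β - 1) = P := by rw [hP]; norm_num
    have hPpos : 0 < P := Real.rpow_pos_of_pos hFpos _
    have hQpos : 0 < Q := Real.rpow_pos_of_pos hupos _
    have hRpos : 0 < R := Real.rpow_pos_of_pos hupos _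
    have key := hineq x hx0.le
    have key2 : (1 - β) * P * Q * deriv f x
        ≤ A * F ^ (1 - β) * (Q / u) + b * (1 - β) * (Q * R) := by
      calc (1 - β) * P * Q * deriv f x
          ≤ (1 - β) * P * Q * (a * F / u + b * F ^ β / u ^ (2*β)) := by
            apply mul_le_mul_of_nonneg_left key (by positivity)
        _ = A * (P * F) * (Q / u) + b * (1 - β) * (P * F ^ β) * (Q * (u ^ (2*β))⁻¹) := by
            rw [hA]; field_simp
        _ = A * F ^ (1 - β) * (Q / u) + b * (1 - β) * (Q * R) := by
            rw [hPF, hPFβ, hRinv]; ring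
    rw [hFP, hQu, hQR]
    have : deriv f x * (1 - β) * P * Q + F ^ (1 - β) * (1 * -A * (Q / u))
        - C * (1 * p * (Q * R))
        = (1 - β) * P * Q * deriv f x
          - (A * F ^ (1 - β) * (Q / u) + b * (1 - β) * (Q * R)) := by
      rw [show C * (1 * p * (Q * R)) = C * p * (Q * R) by ring, hCp]; ring
    rw [this]
    linarith [key2]
  -- continuity and antitonicity
  have hcont : ContinuousOn φ (Set.Ici 0) := by
    apply ContinuousOn.sub
    · apply ContinuousOn.mul
      · exact ContinuousOn.rpow_const hf.continuous.continuousOn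
          (fun x hx => Or.inl (hfpos x hx).ne')
      · exact ContinuousOn.rpow_const (by fun_prop)
          (fun x hx => Or.inl (by simp at hx; positivity))
    · exact ContinuousOn.mul continuousOn_const
        (ContinuousOn.rpow_const (by fun_prop)
          (fun x hx => Or.inl (by simp at hx; positivity)))
  have hanti : AntitoneOn φ (Set.Ici 0) := by
    apply antitoneOn_of_deriv_nonpos (convex_Ici 0) hcont
    · intro x hx
      rw [interior_Ici] at hx
      exact (hderiv x hx).differentiableAt.differentiableWithinAt
    · exact hderiv_le
  intro t ht
  have hmono := hanti (Set.self_mem_Ici) (Set.mem_Ici.2 ht) ht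
  have hupos : (0:ℝ) < t + 1 := by positivity
  have hv : (0:ℝ) < (t + 1) ^ A := Real.rpow_pos_of_pos hupos _
  have e0 : ((0:ℝ) + 1) ^ (-A) = 1 := by norm_num
  have e0' : ((0:ℝ) + 1) ^ p = 1 := by norm_num
  rw [hφ] at hmono
  simp only [e0, e0'] at hmono
  have eQ : (t + 1) ^ (-A) * (t + 1) ^ A = 1 := by
    rw [← Real.rpow_add hupos]; simp
  have eP : (t + 1) ^ p * (t + 1) ^ A = (t + 1) ^ (1 - 2*β) := by
    rw [← Real.rpow_add hupos]; congr 1; rw [hp]; ring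
  have := mul_le_mul_of_nonneg_right hmono hv.le
  have expand : (f t ^ (1 - β) * (t + 1) ^ (-A) - C * (t + 1) ^ p) * (t + 1) ^ A
      = f t ^ (1 - β) * ((t + 1) ^ (-A) * (t + 1) ^ A)
        - C * ((t + 1) ^ p * (t + 1) ^ A) := by ring
  rw [expand, eQ, eP] at this
  have hgoal : f t ^ (1 - β) ≤ f 0 ^ (1 - β) * (t + 1) ^ A
      + C * ((t + 1) ^ (1 - 2*β) - (t + 1) ^ A) := by nlinarith [this]
  have hCeq : b * (1 - β) / (1 - (2 * β + A)) = C := by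
    rw [hC]; congr 1; rw [hp]; ring
  rw [hCeq]
  exact hgoal
end

section
/- Let d ≥ 1 and let γ, δ satisfy 1 < γ < 1 + 2/d and γ - 1/d < δ < γ. Let J : [0,∞) → (0,∞) be C¹ satisfying J'(t) ≤ ((2-d(γ-1))/(t+1))J(t) + (b/(t+1)^{2(δ-1)/(γ-1)}) J(t)^{(δ-1)/(γ-1)} for all t ≥ 0, where b > 0. Then J(t) ≤ (J(0)^{(γ-δ)/(γ-1)} + b(γ-δ)/((γ-1)(1-d(γ-δ))))^{(γ-1)/(γ-δ)} (t+1)^{2-d(γ-1)} for all t ≥ 0. -/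
open Real Set

theorem gronwall_J_sublinear (d : ℕ) (hd : 1 ≤ d) (γ δ b : ℝ)
    (hγ1 : 1 < γ) (hγ2 : γ < 1 + 2 / d)
    (hδ1 : γ - 1 / d < δ) (hδ2 : δ < γ) (hb : 0 < b)
    (J : ℝ → ℝ) (hJ : ContDiff ℝ 1 J)
    (hJpos : ∀ t, 0 ≤ t → 0 < J t)
    (hineq : ∀ t, 0 ≤ t →
      deriv J t ≤ (2 - d * (γ - 1)) / (t + 1) * J t
        + b / (t + 1) ^ (2 * (δ - 1) / (γ - 1)) * J t ^ ((δ - 1) / (γ - 1))) :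
    ∀ t, 0 ≤ t →
      J t ≤ (J 0 ^ ((γ - δ) / (γ - 1))
          + b * (γ - δ) / ((γ - 1) * (1 - d * (γ - δ)))) ^ ((γ - 1) / (γ - δ))
        * (t + 1) ^ (2 - (d : ℝ) * (γ - 1)) := by
  have hd' : (1:ℝ) ≤ (d:ℝ) := by exact_mod_cast hd
  have hd0 : (0:ℝ) < d := by linarith
  have hγ1' : (0:ℝ) < γ - 1 := by linarith
  have hγδ : (0:ℝ) < γ - δ := by linarith
  set a : ℝ := 2 - (d:ℝ) * (γ - 1) with ha
  set β : ℝ := (δ - 1) / (γ - 1) with hβ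
  set c : ℝ := (γ - δ) / (γ - 1) with hc
  set p : ℝ := 2 - (d:ℝ) * (γ - δ) with hp
  have hc0 : 0 < c := div_pos hγδ hγ1'
  have hβc : β + c = 1 := by
    rw [hβ, hc, ← add_div, div_eq_one_iff_eq hγ1'.ne']; ring
  have hp1 : 1 < p := by
    have h1 : γ - δ < 1 / d := by linarith
    have h2 : (d:ℝ) * (γ - δ) < (d:ℝ) * (1/d) := mul_lt_mul_of_pos_left h1 hd0
    rw [mul_one_div_cancel hd0.ne'] at h2
    rw [hp]; linarith
  have hdγδ : (1:ℝ) - (d:ℝ) * (γ - δ) ≠ 0 := by rw [hp] at hp1; intro h; linarith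
  have hpac : 2*β + a*c = p := by
    rw [hβ, hc, ha, hp]; field_simp; ring
  have h2β : 2 * (δ - 1) / (γ - 1) = 2 * β := by rw [hβ]; ring
  have hcb : c*b/(p-1) = b * (γ - δ) / ((γ - 1) * (1 - (d:ℝ) * (γ - δ))) := by
    rw [hc, hp]
    rw [show (2:ℝ) - (d:ℝ)*(γ-δ) - 1 = 1 - (d:ℝ)*(γ-δ) by ring]
    field_simp
  have hinvc : 1/c = (γ - 1) / (γ - δ) := by rw [hc, one_div_div]
  clear_value a β c p
  -- the auxiliary functions
  set H : ℝ → ℝ := fun s => J s ^ c * (s+1) ^ (-(a*c)) with hH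
  set ψ : ℝ → ℝ := fun s => J 0 ^ c + c*b/(p-1) * (1 - (s+1)^(1-p)) with hψ
  have hJd : ∀ s : ℝ, HasDerivAt J (deriv J s) s := fun s =>
    ((hJ.differentiable one_ne_zero) s).hasDerivAt
  have hHder : ∀ s, 0 ≤ s → HasDerivAt H
      (deriv J s * c * J s ^ (c-1) * (s+1)^(-(a*c))
        + J s ^ c * ((-(a*c)) * (s+1)^(-(a*c)-1))) s := by
    intro s hs
    have h2 := (hJd s).rpow_const (p := c) (Or.inl (hJpos s hs).ne')
    have h3 : HasDerivAt (fun x : ℝ => x + 1) 1 s := (hasDerivAt_id s).add_const 1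
    have h4 := h3.rpow_const (p := -(a*c)) (Or.inl (by linarith : (s+1:ℝ) ≠ 0))
    rw [hH]
    refine (h2.mul h4).congr_deriv ?_
    ring
  have hψder : ∀ s, 0 ≤ s → HasDerivAt ψ (c*b*(s+1)^(-p)) s := by
    intro s hs
    have h3 : HasDerivAt (fun x : ℝ => x + 1) 1 s := (hasDerivAt_id s).add_const 1
    have h4 := h3.rpow_const (p := 1-p) (Or.inl (by linarith : (s+1:ℝ) ≠ 0))
    have h5 := ((h4.const_sub 1).const_mul (c*b/(p-1))).const_add (J 0 ^ c)
    rw [hψ]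
    refine h5.congr_deriv ?_
    rw [show (1:ℝ)-p-1 = -p by ring]
    have hpne : p - 1 ≠ 0 := by linarith
    field_simp
    ring
  -- key derivative bound for H
  have hkey : ∀ s, 0 ≤ s →
      deriv J s * c * J s ^ (c-1) * (s+1)^(-(a*c))
        + J s ^ c * ((-(a*c)) * (s+1)^(-(a*c)-1)) ≤ c*b*(s+1)^(-p) := by
    intro s hs
    have hu : (0:ℝ) < s + 1 := by linarith
    have JP := hJpos s hs
    have hmul : (0:ℝ) < c * J s ^ (c-1) * (s+1)^(-(a*c)) := by positivity
    have h1 := mul_le_mul_of_nonneg_right (hineq s hs) hmul.le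
    have e1 : J s ^ (c-1) * J s = J s ^ c := by
      rw [← Real.rpow_add_one JP.ne']; norm_num
    have e2 : J s ^ β * J s ^ (c-1) = 1 := by
      rw [← Real.rpow_add JP]
      rw [show β + (c-1) = 0 by linarith, Real.rpow_zero]
    have e3 : (s+1)^(-(a*c)) / (s+1) = (s+1)^(-(a*c)-1) := by
      rw [Real.rpow_sub hu, Real.rpow_one]
    have e4 : b / (s+1) ^ (2 * (δ-1) / (γ-1)) * (s+1)^(-(a*c)) = b * (s+1)^(-p) := by
      rw [h2β, div_mul_eq_mul_div, mul_div_assoc, ← Real.rpow_sub hu]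
      rw [show -(a*c) - 2*β = -p by linarith]
    calc deriv J s * c * J s ^ (c-1) * (s+1)^(-(a*c))
          + J s ^ c * ((-(a*c)) * (s+1)^(-(a*c)-1))
        = deriv J s * (c * J s ^ (c-1) * (s+1)^(-(a*c)))
          - a*c* (J s ^ c * (s+1)^(-(a*c)-1)) := by ring
      _ ≤ (a / (s+1) * J s + b / (s+1) ^ (2 * (δ-1) / (γ-1)) * J s ^ β)
            * (c * J s ^ (c-1) * (s+1)^(-(a*c)))
          - a*c* (J s ^ c * (s+1)^(-(a*c)-1)) := by linarith [h1]
      _ = a*c* ((J s ^ (c-1) * J s) * ((s+1)^(-(a*c)) / (s+1)))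
          + c * (J s ^ β * J s ^ (c-1)) * (b / (s+1) ^ (2 * (δ-1) / (γ-1)) * (s+1)^(-(a*c)))
          - a*c* (J s ^ c * (s+1)^(-(a*c)-1)) := by ring
      _ = c*b*(s+1)^(-p) := by rw [e1, e2, e3, e4]; ring
  -- monotonicity of ψ - H on [0, ∞)
  have hmono : MonotoneOn (fun s => ψ s - H s) (Ici (0:ℝ)) := by
    apply monotoneOn_of_deriv_nonneg (convex_Ici 0)
    · apply ContinuousOn.sub
      · apply ContinuousOn.add continuousOn_const
        apply ContinuousOn.mul continuousOn_const
        apply ContinuousOn.sub continuousOn_const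
        exact ContinuousOn.rpow_const
          ((continuous_id.add continuous_const).continuousOn)
          (fun x hx => Or.inl (by simp only [mem_Ici] at hx; intro h; linarith))
      · apply ContinuousOn.mul
        · exact ContinuousOn.rpow_const hJ.continuous.continuousOn
            (fun x _ => Or.inr hc0.le)
        · exact ContinuousOn.rpow_const
            ((continuous_id.add continuous_const).continuousOn)
            (fun x hx => Or.inl (by simp only [mem_Ici] at hx; intro h; linarith))
    · rw [interior_Ici]
      intro x hx
      exact ((hψder x (le_of_lt hx)).sub
        (hHder x (le_of_lt hx))).differentiableAt.differentiableWithinAt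
    · rw [interior_Ici]
      intro x hx
      rw [show (fun s => ψ s - H s) = ψ - H from rfl, ((hψder x (le_of_lt hx)).sub (hHder x (le_of_lt hx))).deriv]
      have := hkey x (le_of_lt hx)
      linarith
  intro t ht
  have hu : (0:ℝ) < t + 1 := by linarith
  have J0 := hJpos 0 le_rfl
  have hF0 : ψ 0 - H 0 = 0 := by
    rw [hψ, hH]; norm_num
  have hFt : ψ 0 - H 0 ≤ ψ t - H t := hmono (self_mem_Ici) (mem_Ici.mpr ht) ht
  rw [hF0] at hFt
  set M : ℝ := J 0 ^ c + c*b/(p-1) with hM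
  have hψle : ψ t ≤ M := by
    rw [hψ, hM]
    have h1 : (0:ℝ) ≤ (t+1)^(1-p) := Real.rpow_nonneg hu.le _
    have h2 : (0:ℝ) < c*b/(p-1) := div_pos (mul_pos hc0 hb) (by linarith)
    simp only
    nlinarith
  have hHle : H t ≤ M := by linarith
  have hMpos : 0 < M := by
    have h1 : (0:ℝ) < J 0 ^ c := Real.rpow_pos_of_pos J0 c
    have h2 : (0:ℝ) < c*b/(p-1) := div_pos (mul_pos hc0 hb) (by linarith)
    rw [hM]; linarith
  have hJt : J t = (H t) ^ (1/c) * (t+1)^a := by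
    rw [hH]
    simp only
    rw [Real.mul_rpow (Real.rpow_nonneg (hJpos t ht).le _) (Real.rpow_nonneg hu.le _)]
    rw [← Real.rpow_mul (hJpos t ht).le, ← Real.rpow_mul hu.le]
    rw [mul_one_div_cancel hc0.ne']
    rw [show -(a*c) * (1/c) = -a by field_simp]
    rw [Real.rpow_one, mul_assoc, ← Real.rpow_add hu, neg_add_cancel, Real.rpow_zero, mul_one]
  have hHpos : 0 < H t := by
    rw [hH]
    exact mul_pos (Real.rpow_pos_of_pos (hJpos t ht) c) (Real.rpow_pos_of_pos hu _)
  have hstep : (H t) ^ (1/c) ≤ M ^ (1/c) :=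
    Real.rpow_le_rpow hHpos.le hHle (by positivity)
  have hfin : J t ≤ M ^ (1/c) * (t+1)^a := by
    rw [hJt]
    exact mul_le_mul_of_nonneg_right hstep (Real.rpow_nonneg hu.le _)
  have hMeq : M ^ (1/c)
      = (J 0 ^ c + b * (γ - δ) / ((γ - 1) * (1 - (d:ℝ) * (γ - δ)))) ^ ((γ-1)/(γ-δ)) := by
    rw [hM, hcb, hinvc]
  rw [hMeq] at hfin
  exact hfin
end
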